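/- Let m ≥ 1, t₀ < T, let r : ℝ^m → ℝ^m and q : ℝ^m → (symmetric positive definite m×m matrices) be continuous, let h : ℝ^m → ℝ be continuous, and let Ū : [t₀,T] × ℝ^m → ℝ be continuously differentiable with ∂_s Ū(s,x) + ⟨r(x), ∇_x Ū(s,x)⟩ − (1/2)⟨∇_x Ū(s,x), q(x)·∇_x Ū(s,x)⟩ ≥ 0 on (t₀,T) × ℝ^m and Ū(T,x) ≤ h(x) for all x. Then for every continuously differentiable path φ : [t₀,T] → ℝ^m with φ(t₀) = x₀ one has ∫_{t₀}^T (1/2)⟨φ'(s) − r(φ(s)), q(φ(s))⁻¹(φ'(s) − r(φ(s)))⟩ ds + 2h(φ(T)) − ∫_{t₀}^T [⟨φ'(s) − r(φ(s)), ∇_x Ū(s,φ(s))⟩ + (1/2)⟨∇_x Ū(s,φ(s)), q(φ(s))·∇_x Ū(s,φ(s))⟩] ds ≥ G(t₀,x₀) + Ū(t₀,x₀), where G(t₀,x₀) = inf{∫_{t₀}^T (1/2)⟨ψ'(s) − r(ψ(s)), q(ψ(s))⁻¹(ψ'(s) − r(ψ(s)))⟩ ds + h(ψ(T)) : ψ ∈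 C¹([t₀,T];ℝ^m), ψ(t₀)=x₀}. -/

import Mathlib

open Matrix

/-- The continuous linear map `w ↦ v ⬝ᵥ w` on `ℝ^m`, used to express the spatial
gradient of a function as a Fréchet derivative. -/
noncomputable def dotCLM {m : ℕ} (v : Fin m → ℝ) : (Fin m → ℝ) →L[ℝ] ℝ :=
  LinearMap.toContinuousLinearMap
    { toFun := fun w => v ⬝ᵥ w
      map_add' := fun w₁ w₂ => by simp [dotProduct_add]
      map_smul' := fun c w => by simp [dotProduct_smul] }

/-- Deterministic variational core of the importance-sampling optimality theorem:
for a classical `C¹` subsolution `Ū` of the homogenized HJB equation with `Ū(T,·) ≤ h`,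
every `C¹` path `φ` with `φ(t₀) = x₀` satisfies
`∫ L(φ,φ') ds + 2h(φ(T)) − ∫ [⟨φ'−r(φ), ∇_xŪ⟩ + (1/2)⟨∇_xŪ, q(φ)∇_xŪ⟩] ds
   ≥ G(t₀,x₀) + Ū(t₀,x₀)`,
where `L(x,β) = (1/2)⟨β−r(x), q(x)⁻¹(β−r(x))⟩` and `G` is the value function. -/
@[simp] lemma dotCLM_apply {m : ℕ} (v w : Fin m → ℝ) : dotCLM v w = v ⬝ᵥ w := rfl

lemma posdef_dot {m : ℕ} {M : Matrix (Fin m) (Fin m) ℝ} (hM : M.PosDef) (v : Fin m → ℝ) :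
    0 ≤ v ⬝ᵥ M.mulVec v := by
  simpa using hM.posSemidef.dotProduct_mulVec_nonneg v

lemma symm_dot {m : ℕ} {M : Matrix (Fin m) (Fin m) ℝ} (hM : M.IsHermitian)
    (p w : Fin m → ℝ) : M.mulVec p ⬝ᵥ w = p ⬝ᵥ M.mulVec w := by
  rw [Matrix.dotProduct_mulVec, ← Matrix.mulVec_transpose]
  have : Mᵀ = M := hM
  rw [this, dotProduct_comm]

lemma legendre {m : ℕ} {M : Matrix (Fin m) (Fin m) ℝ} (hM : M.PosDef) (v p : Fin m → ℝ) :
    -(v ⬝ᵥ p) - (1/2) * (p ⬝ᵥ M.mulVec p) ≤ (1/2) * (v ⬝ᵥ M⁻¹.mulVec v) := by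
  have hinv := hM.inv
  have h0 := posdef_dot hinv (v + M.mulVec p)
  have hexp : (v + M.mulVec p) ⬝ᵥ M⁻¹.mulVec (v + M.mulVec p)
      = v ⬝ᵥ M⁻¹.mulVec v + 2 * (v ⬝ᵥ p) + p ⬝ᵥ M.mulVec p := by
    have hMM : M⁻¹.mulVec (M.mulVec p) = p := by
      rw [Matrix.mulVec_mulVec, Matrix.nonsing_inv_mul M hM.det_pos.ne'.isUnit,
        Matrix.one_mulVec]
    rw [Matrix.mulVec_add, add_dotProduct, dotProduct_add, dotProduct_add,
      hMM]
    have h1 : M.mulVec p ⬝ᵥ M⁻¹.mulVec v = p ⬝ᵥ M.mulVec (M⁻¹.mulVec v) :=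
      symm_dot hM.isHermitian p (M⁻¹.mulVec v)
    have h2 : M.mulVec (M⁻¹.mulVec v) = v := by
      rw [Matrix.mulVec_mulVec, Matrix.mul_nonsing_inv M hM.det_pos.ne'.isUnit,
        Matrix.one_mulVec]
    rw [h1, h2, dotProduct_comm p v, symm_dot hM.isHermitian p p]
    ring
  rw [hexp] at h0
  linarith

lemma cont_inv_path {m : ℕ} {q : (Fin m → ℝ) → Matrix (Fin m) (Fin m) ℝ}
    (hqc : Continuous q) (hqpd : ∀ x, (q x).PosDef) :
    Continuous fun x => (q x)⁻¹ := by
  have heq : (fun x => (q x)⁻¹) = fun x => ((q x).det)⁻¹ • (q x).adjugate := by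
    funext x
    rw [Matrix.inv_def, Ring.inverse_eq_inv']
  rw [heq]
  exact (hqc.matrix_det.inv₀ fun x => (hqpd x).det_pos.ne').smul hqc.matrix_adjugate

lemma core {m : ℕ} (t₀ T : ℝ) (ht : t₀ < T)
    (r : (Fin m → ℝ) → (Fin m → ℝ)) (q : (Fin m → ℝ) → Matrix (Fin m) (Fin m) ℝ)
    (hr : Continuous r) (hqc : Continuous q) (hqpd : ∀ x, (q x).PosDef)
    (h : (Fin m → ℝ) → ℝ)
    (U Ut : ℝ → (Fin m → ℝ) → ℝ) (Ux : ℝ → (Fin m → ℝ) → (Fin m → ℝ))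
    (hU : ContDiff ℝ 1 (Function.uncurry U))
    (hUt : ∀ s x, HasDerivAt (fun t => U t x) (Ut s x) s)
    (hUx : ∀ s x, HasFDerivAt (fun y => U s y) (dotCLM (Ux s x)) x)
    (hsub : ∀ s ∈ Set.Ioo t₀ T, ∀ x,
      0 ≤ Ut s x + r x ⬝ᵥ Ux s x - (1 / 2) * (Ux s x ⬝ᵥ (q x).mulVec (Ux s x)))
    (hterm : ∀ x, U T x ≤ h x)
    (ψ ψ' : ℝ → Fin m → ℝ) (hψ : ContDiff ℝ 1 ψ) (hψd : ∀ s, HasDerivAt ψ (ψ' s) s) :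
    U t₀ (ψ t₀) ≤ h (ψ T) - (∫ s in t₀..T,
      ((ψ' s - r (ψ s)) ⬝ᵥ Ux s (ψ s)
        + (1 / 2) * (Ux s (ψ s) ⬝ᵥ (q (ψ s)).mulVec (Ux s (ψ s)))))
    ∧ U t₀ (ψ t₀) ≤ (∫ s in t₀..T,
        (1 / 2) * ((ψ' s - r (ψ s)) ⬝ᵥ (q (ψ s))⁻¹.mulVec (ψ' s - r (ψ s)))) + h (ψ T) := by
  set D := fderiv ℝ (Function.uncurry U) with hDdef
  have hD : ∀ p, HasFDerivAt (Function.uncurry U) (D p) p :=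
    fun p => (hU.differentiable one_ne_zero p).hasFDerivAt
  have hDc : Continuous D := (contDiff_one_iff_fderiv.mp hU).2
  -- partial derivatives identified
  have hUtD : ∀ s x, Ut s x = D (s, x) (1, 0) := by
    intro s x
    have hp : HasDerivAt (fun t : ℝ => (t, x)) ((1:ℝ), (0 : Fin m → ℝ)) s :=
      (hasDerivAt_id s).prodMk (hasDerivAt_const s x)
    have h1 : HasDerivAt (fun t => U t x) (D (s, x) (1, 0)) s := by
      simpa [Function.uncurry, Function.comp_def] using (hD (s, x)).comp_hasDerivAt s hp
    exact (hUt s x).unique h1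
  have hUxD : ∀ s x (v : Fin m → ℝ), Ux s x ⬝ᵥ v = D (s, x) (0, v) := by
    intro s x v
    have hp : HasFDerivAt (fun y : Fin m → ℝ => (s, y))
        (ContinuousLinearMap.inr ℝ ℝ (Fin m → ℝ)) x :=
      (hasFDerivAt_const s x).prodMk (hasFDerivAt_id x)
    have h1 : HasFDerivAt (fun y => U s y)
        ((D (s, x)).comp (ContinuousLinearMap.inr ℝ ℝ (Fin m → ℝ))) x := by
      simpa [Function.uncurry, Function.comp_def] using (hD (s, x)).comp x hp
    have h2 := (hUx s x).unique h1
    calc Ux s x ⬝ᵥ v = dotCLM (Ux s x) v := rfl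
      _ = ((D (s, x)).comp (ContinuousLinearMap.inr ℝ ℝ (Fin m → ℝ))) v := by rw [h2]
      _ = D (s, x) (0, v) := rfl
  have hsplit : ∀ s x (v : Fin m → ℝ), D (s, x) (1, v) = Ut s x + Ux s x ⬝ᵥ v := by
    intro s x v
    have : ((1:ℝ), v) = ((1:ℝ), (0 : Fin m → ℝ)) + ((0:ℝ), v) := by simp
    rw [this, map_add, ← hUtD, ← hUxD]
  -- chain rule
  have hchain : ∀ s, HasDerivAt (fun t => U t (ψ t)) (Ut s (ψ s) + Ux s (ψ s) ⬝ᵥ ψ' s) s := by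
    intro s
    have hp : HasDerivAt (fun t : ℝ => (t, ψ t)) ((1:ℝ), ψ' s) s :=
      (hasDerivAt_id s).prodMk (hψd s)
    have h1 : HasDerivAt (fun t => U t (ψ t)) (D (s, ψ s) (1, ψ' s)) s := by
      simpa [Function.uncurry, Function.comp_def] using (hD (s, ψ s)).comp_hasDerivAt s hp
    rwa [hsplit] at h1
  -- continuity facts
  have hψc : Continuous ψ := hψ.continuous
  have hψ'c : Continuous ψ' := by
    have : ψ' = deriv ψ := funext fun s => (hψd s).deriv.symm
    rw [this]; exact hψ.continuous_deriv le_rfl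
  have hDpath : Continuous fun s => D (s, ψ s) := hDc.comp (continuous_id.prodMk hψc)
  have hgc : Continuous fun s => Ut s (ψ s) + Ux s (ψ s) ⬝ᵥ ψ' s := by
    have heq : (fun s => Ut s (ψ s) + Ux s (ψ s) ⬝ᵥ ψ' s)
        = fun s => D (s, ψ s) (1, ψ' s) := funext fun s => (hsplit s (ψ s) (ψ' s)).symm
    rw [heq]
    exact hDpath.clm_apply (continuous_const.prodMk hψ'c)
  have hUxc : Continuous fun s => Ux s (ψ s) := by
    have heq : (fun s => Ux s (ψ s))
        = fun s => fun i => D (s, ψ s) (0, Pi.single i 1) := by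
      funext s i
      have := hUxD s (ψ s) (Pi.single i 1)
      rwa [dotProduct_single, mul_one] at this
    rw [heq]
    exact continuous_pi fun i => hDpath.clm_apply continuous_const
  have hIc : Continuous fun s => (ψ' s - r (ψ s)) ⬝ᵥ Ux s (ψ s)
      + (1 / 2) * (Ux s (ψ s) ⬝ᵥ (q (ψ s)).mulVec (Ux s (ψ s))) :=
    ((hψ'c.sub (hr.comp hψc)).dotProduct hUxc).add
      (continuous_const.mul (hUxc.dotProduct ((hqc.comp hψc).matrix_mulVec hUxc)))
  -- FTC
  have hftc : (∫ s in t₀..T, (Ut s (ψ s) + Ux s (ψ s) ⬝ᵥ ψ' s))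
      = U T (ψ T) - U t₀ (ψ t₀) :=
    intervalIntegral.integral_eq_sub_of_hasDerivAt (fun s _ => hchain s)
      (hgc.intervalIntegrable t₀ T)
  -- pointwise inequality extended to Icc
  have hpt : ∀ s ∈ Set.Icc t₀ T,
      (ψ' s - r (ψ s)) ⬝ᵥ Ux s (ψ s)
        + (1 / 2) * (Ux s (ψ s) ⬝ᵥ (q (ψ s)).mulVec (Ux s (ψ s)))
      ≤ Ut s (ψ s) + Ux s (ψ s) ⬝ᵥ ψ' s := by
    have hIoo : ∀ s ∈ Set.Ioo t₀ T,
        (ψ' s - r (ψ s)) ⬝ᵥ Ux s (ψ s)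
          + (1 / 2) * (Ux s (ψ s) ⬝ᵥ (q (ψ s)).mulVec (Ux s (ψ s)))
        ≤ Ut s (ψ s) + Ux s (ψ s) ⬝ᵥ ψ' s := by
      intro s hs
      have h0 := hsub s hs (ψ s)
      have e1 : (ψ' s - r (ψ s)) ⬝ᵥ Ux s (ψ s)
          = ψ' s ⬝ᵥ Ux s (ψ s) - r (ψ s) ⬝ᵥ Ux s (ψ s) := sub_dotProduct _ _ _
      have e2 : Ux s (ψ s) ⬝ᵥ ψ' s = ψ' s ⬝ᵥ Ux s (ψ s) := dotProduct_comm _ _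
      rw [e1, e2]
      linarith
    intro s hs
    rw [← closure_Ioo ht.ne] at hs
    exact le_on_closure hIoo (hIc.continuousOn) (hgc.continuousOn) hs
  have hmono := intervalIntegral.integral_mono_on (μ := MeasureTheory.volume) ht.le (hIc.intervalIntegrable t₀ T)
    (hgc.intervalIntegrable t₀ T) hpt
  rw [hftc] at hmono
  have hT := hterm (ψ T)
  have hLc : Continuous fun s =>
      (1 / 2) * ((ψ' s - r (ψ s)) ⬝ᵥ (q (ψ s))⁻¹.mulVec (ψ' s - r (ψ s))) :=
    continuous_const.mul ((hψ'c.sub (hr.comp hψc)).dotProduct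
      (((cont_inv_path hqc hqpd).comp hψc).matrix_mulVec (hψ'c.sub (hr.comp hψc))))
  have hleg : ∀ s ∈ Set.Icc t₀ T,
      -((ψ' s - r (ψ s)) ⬝ᵥ Ux s (ψ s)
        + (1 / 2) * (Ux s (ψ s) ⬝ᵥ (q (ψ s)).mulVec (Ux s (ψ s))))
      ≤ (1 / 2) * ((ψ' s - r (ψ s)) ⬝ᵥ (q (ψ s))⁻¹.mulVec (ψ' s - r (ψ s))) := by
    intro s _
    have := legendre (hqpd (ψ s)) (ψ' s - r (ψ s)) (Ux s (ψ s))
    linarith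
  have hmono2 := intervalIntegral.integral_mono_on (μ := MeasureTheory.volume) ht.le
    (hIc.neg.intervalIntegrable t₀ T) (hLc.intervalIntegrable t₀ T) hleg
  simp only [Pi.neg_apply] at hmono2
  rw [intervalIntegral.integral_neg] at hmono2
  constructor
  · linarith
  · linarith

theorem importance_sampling_variational_core {m : ℕ} (hm : 1 ≤ m) (t₀ T : ℝ) (ht : t₀ < T)
    (r : (Fin m → ℝ) → (Fin m → ℝ)) (q : (Fin m → ℝ) → Matrix (Fin m) (Fin m) ℝ)
    (hr : Continuous r) (hqc : Continuous q) (hqpd : ∀ x, (q x).PosDef)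
    (h : (Fin m → ℝ) → ℝ) (hh : Continuous h)
    (U Ut : ℝ → (Fin m → ℝ) → ℝ) (Ux : ℝ → (Fin m → ℝ) → (Fin m → ℝ))
    (hU : ContDiff ℝ 1 (Function.uncurry U))
    (hUt : ∀ s x, HasDerivAt (fun t => U t x) (Ut s x) s)
    (hUx : ∀ s x, HasFDerivAt (fun y => U s y) (dotCLM (Ux s x)) x)
    (hsub : ∀ s ∈ Set.Ioo t₀ T, ∀ x,
      0 ≤ Ut s x + r x ⬝ᵥ Ux s x - (1 / 2) * (Ux s x ⬝ᵥ (q x).mulVec (Ux s x)))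
    (hterm : ∀ x, U T x ≤ h x)
    (x₀ : Fin m → ℝ)
    (G : ℝ)
    (hG : G = sInf { y : ℝ | ∃ ψ ψ' : ℝ → Fin m → ℝ, ContDiff ℝ 1 ψ ∧
          (∀ s, HasDerivAt ψ (ψ' s) s) ∧ ψ t₀ = x₀ ∧
          y = (∫ s in t₀..T,
                (1 / 2) * ((ψ' s - r (ψ s)) ⬝ᵥ (q (ψ s))⁻¹.mulVec (ψ' s - r (ψ s))))
                + h (ψ T) }) :
    ∀ φ φ' : ℝ → Fin m → ℝ, ContDiff ℝ 1 φ → (∀ s, HasDerivAt φ (φ' s) s) →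
      φ t₀ = x₀ →
      G + U t₀ x₀ ≤
        (∫ s in t₀..T,
          (1 / 2) * ((φ' s - r (φ s)) ⬝ᵥ (q (φ s))⁻¹.mulVec (φ' s - r (φ s))))
        + 2 * h (φ T)
        - ∫ s in t₀..T,
            ((φ' s - r (φ s)) ⬝ᵥ Ux s (φ s)
              + (1 / 2) * (Ux s (φ s) ⬝ᵥ (q (φ s)).mulVec (Ux s (φ s)))) := by
  intro φ φ' hφ hφd hφ0
  obtain ⟨k1, k2⟩ := core t₀ T ht r q hr hqc hqpd h U Ut Ux hU hUt hUx hsub hterm φ φ' hφ hφd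
  rw [hφ0] at k1 k2
  have hGle : G ≤ (∫ s in t₀..T,
      (1 / 2) * ((φ' s - r (φ s)) ⬝ᵥ (q (φ s))⁻¹.mulVec (φ' s - r (φ s)))) + h (φ T) := by
    rw [hG]
    apply csInf_le
    · refine ⟨U t₀ x₀, ?_⟩
      rintro y ⟨ψ, ψ', hψ, hψd, hψ0, rfl⟩
      have := (core t₀ T ht r q hr hqc hqpd h U Ut Ux hU hUt hUx hsub hterm ψ ψ' hψ hψd).2
      rwa [hψ0] at this
    · exact ⟨φ, φ', hφ, hφd, hφ0, rfl⟩
  linarith
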